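/- If f : ℝ → ℝ is non-decreasing on positive reals, f(1) = 1, and 2·f(x) + f(y) ≤ f(x + y) for all reals 0 < x ≤ y, then f(2^m) ≥ 3^m for every natural number m; in particular f(n) ≥ n^{log₂ 3} for infinitely many positive integers n. -/

import Mathlib

theorem stmt4 (f : ℝ → ℝ) (hmono : MonotoneOn f (Set.Ioi (0:ℝ)))
    (hf1 : f 1 = 1)
    (hsuper : ∀ x y : ℝ, 0 < x → x ≤ y → 2 * f x + f y ≤ f (x + y)) :
    (∀ m : ℕ, (3:ℝ) ^ m ≤ f (2 ^ m)) ∧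
    {n : ℕ | 0 < n ∧ (n : ℝ) ^ Real.logb 2 3 ≤ f n}.Infinite := by
  have key : ∀ m : ℕ, (3:ℝ) ^ m ≤ f (2 ^ m) := by
    intro m
    induction m with
    | zero => simp [hf1]
    | succ n ih =>
      have hp : (0:ℝ) < 2 ^ n := by positivity
      have h := hsuper (2 ^ n) (2 ^ n) hp le_rfl
      have : (3:ℝ) * f (2 ^ n) ≤ f (2 ^ n + 2 ^ n) := by linarith
      calc (3:ℝ) ^ (n+1) = 3 * 3 ^ n := by ring
        _ ≤ 3 * f (2 ^ n) := by nlinarith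
        _ ≤ f (2 ^ n + 2 ^ n) := this
        _ = f (2 ^ (n+1)) := by ring_nf
  refine ⟨key, ?_⟩
  apply Set.infinite_of_injective_forall_mem (f := fun m : ℕ => 2 ^ m)
  · intro a b hab
    exact Nat.pow_right_injective (le_refl 2) hab
  · intro m
    refine ⟨Nat.pow_pos (by norm_num), ?_⟩
    have hcast : ((2 ^ m : ℕ) : ℝ) = (2:ℝ) ^ m := by push_cast; ring
    rw [hcast]
    have : ((2:ℝ) ^ m) ^ Real.logb 2 3 = 3 ^ m := by
      rw [← Real.rpow_natCast 2 m, ← Real.rpow_mul (by norm_num), mul_comm,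
        Real.rpow_mul (by norm_num), Real.rpow_logb (by norm_num) (by norm_num) (by norm_num),
        Real.rpow_natCast]
    rw [this]
    exact key m
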